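/- Let G be a finite p-group with p odd such that Φ(G) ≤ Z(G), G^{p²} = 1, and the map g·Φ(G) ↦ g^p is a well-defined bijection from G/Φ(G) to Φ(G). Then the product on G/Φ(G) defined by ⟨x̄, ȳ⟩ = the unique element z̄ with z^p = [x,y] is well-defined and bilinear over F_p, and satisfies ⟨x̄, x̄⟩ = 0 for all x̄. -/

import Mathlib

open scoped commutatorElement

private lemma pow_comm_aux {G : Type*} [Group G] (x y : G)
    (h : ∀ g : G, Commute ⁅y, x⁆ g) : ∀ n : ℕ, y ^ n * x = x * y ^ n * ⁅y, x⁆ ^ n := by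
  have hyx : y * x = x * y * ⁅y, x⁆ := by
    have h1 : y * x = ⁅y, x⁆ * (x * y) := by rw [commutatorElement_def]; group
    rw [h1, (h (x * y)).eq]
  intro n
  induction n with
  | zero => simp
  | succ n ih =>
    calc y ^ (n+1) * x = y * (y ^ n * x) := by rw [pow_succ']; simp only [mul_assoc]
    _ = y * (x * y ^ n * ⁅y, x⁆ ^ n) := by rw [ih]
    _ = (y * x) * y ^ n * ⁅y, x⁆ ^ n := by simp only [mul_assoc]
    _ = (x * y * ⁅y, x⁆) * y ^ n * ⁅y, x⁆ ^ n := by rw [← hyx]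
    _ = x * y * (⁅y, x⁆ * y ^ n) * ⁅y, x⁆ ^ n := by simp only [mul_assoc]
    _ = x * y * (y ^ n * ⁅y, x⁆) * ⁅y, x⁆ ^ n := by rw [(h (y ^ n)).eq]
    _ = x * y ^ (n+1) * ⁅y, x⁆ ^ (n+1) := by
        rw [pow_succ' y, pow_succ' ⁅y, x⁆]
        simp only [mul_assoc]

private lemma mul_pow_aux {G : Type*} [Group G] (x y : G)
    (h : ∀ g : G, Commute ⁅y, x⁆ g) :
    ∀ n : ℕ, (x * y) ^ n = x ^ n * y ^ n * ⁅y, x⁆ ^ (n.choose 2) := by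
  intro n
  induction n with
  | zero => simp
  | succ n ih =>
    have hch : (n+1).choose 2 = n + n.choose 2 := by
      rw [Nat.choose_succ_succ]
      simp [Nat.choose_one_right]
    calc (x * y) ^ (n+1) = (x * y) ^ n * (x * y) := pow_succ _ _
    _ = x ^ n * y ^ n * ⁅y, x⁆ ^ (n.choose 2) * (x * y) := by rw [ih]
    _ = x ^ n * y ^ n * (⁅y, x⁆ ^ (n.choose 2) * x) * y := by simp only [mul_assoc]
    _ = x ^ n * y ^ n * (x * ⁅y, x⁆ ^ (n.choose 2)) * y := by
        rw [((h x).pow_left (n.choose 2)).eq]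
    _ = x ^ n * (y ^ n * x) * (⁅y, x⁆ ^ (n.choose 2) * y) := by simp only [mul_assoc]
    _ = x ^ n * (y ^ n * x) * (y * ⁅y, x⁆ ^ (n.choose 2)) := by
        rw [((h y).pow_left (n.choose 2)).eq]
    _ = x ^ n * (x * y ^ n * ⁅y, x⁆ ^ n) * (y * ⁅y, x⁆ ^ (n.choose 2)) := by
        rw [pow_comm_aux x y h n]
    _ = x ^ n * x * y ^ n * (⁅y, x⁆ ^ n * y) * ⁅y, x⁆ ^ (n.choose 2) := by simp only [mul_assoc]
    _ = x ^ n * x * y ^ n * (y * ⁅y, x⁆ ^ n) * ⁅y, x⁆ ^ (n.choose 2) := by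
        rw [((h y).pow_left n).eq]
    _ = x ^ (n+1) * y ^ (n+1) * ⁅y, x⁆ ^ ((n+1).choose 2) := by
        rw [hch, pow_succ x n, pow_succ y n, pow_add ⁅y, x⁆ n (n.choose 2)]
        simp only [mul_assoc]

/-- Let `p` be an odd prime and `G` a finite `p`-group with
`Φ(G) ≤ Z(G)`, `G^{p²} = 1`, and such that `g·Φ(G) ↦ g^p` is a well-defined
bijection `G/Φ(G) → Φ(G)` (encoded by a map `f` with `f x̄ = x^p`).
Then the product `⟨x̄, ȳ⟩ := z̄` where `z^p = [x,y]` is well-defined and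
bilinear over `F_p` (additive in each variable, hence `F_p`-bilinear) and
alternating: there is a map `m` on `G/Φ(G)` with `f (m x̄ ȳ) = [x,y]`,
additive in each argument, and `m a a = 1`. -/
theorem stmt1 {p : ℕ} [Fact p.Prime] (hodd : Odd p)
    {G : Type*} [Group G] [Finite G] (hp : IsPGroup p G)
    (hcentral : frattini G ≤ Subgroup.center G)
    (hexp : ∀ g : G, g ^ (p ^ 2) = 1)
    (f : G ⧸ frattini G → frattini G)
    (hf : ∀ x : G, (f ((x : G ⧸ frattini G)) : G) = x ^ p)
    (hbij : Function.Bijective f) :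
    ∃ m : G ⧸ frattini G → G ⧸ frattini G → G ⧸ frattini G,
      (∀ x y : G, (f (m x y) : G) = ⁅x, y⁆) ∧
      (∀ a b c : G ⧸ frattini G, m (a * b) c = m a c * m b c) ∧
      (∀ a b c : G ⧸ frattini G, m a (b * c) = m a b * m a c) ∧
      (∀ a : G ⧸ frattini G, m a a = 1) := by
  classical
  have hpp : p.Prime := Fact.out
  -- commutators lie in the Frattini subgroup
  have hcomm : ∀ x y : G, ⁅x, y⁆ ∈ frattini G := by
    intro x y
    simp only [frattini, Order.radical, Subgroup.mem_iInf]
    intro M hM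
    have hnil : Group.IsNilpotent G := hp.isNilpotent
    have hco : ∀ H : Subgroup G, IsCoatom H → H.Normal :=
      ((isNilpotent_of_finite_tfae (G := G)).out 0 2).mp hnil
    have hnorm : M.Normal := hco M hM
    have hne : M ≠ ⊤ := hM.1
    obtain ⟨g0, hg0⟩ : ∃ g : G, g ∉ M := by
      by_contra h
      push_neg at h
      exact hne ((Subgroup.eq_top_iff' M).mpr h)
    have hQnt : Nontrivial (G ⧸ M) :=
      ⟨QuotientGroup.mk g0, 1, fun hh => hg0 ((QuotientGroup.eq_one_iff g0).mp hh)⟩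
    have hQp : IsPGroup p (G ⧸ M) := hp.to_quotient M
    have hZnt : Nontrivial (Subgroup.center (G ⧸ M)) := hQp.center_nontrivial
    set Z := Subgroup.center (G ⧸ M) with hZ
    have hMle : M ≤ Z.comap (QuotientGroup.mk' M) := by
      intro g hg
      have h1 : (QuotientGroup.mk' M) g = 1 := (QuotientGroup.eq_one_iff g).mpr hg
      simp only [Subgroup.mem_comap]
      rw [h1]
      exact Subgroup.one_mem _
    have hne2 : M ≠ Z.comap (QuotientGroup.mk' M) := by
      intro h
      obtain ⟨⟨z, hz⟩, hz1⟩ := exists_ne (1 : Z)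
      obtain ⟨g, rfl⟩ := QuotientGroup.mk'_surjective M z
      have hgM : g ∈ M := by
        have : g ∈ Z.comap (QuotientGroup.mk' M) := hz
        rwa [← h] at this
      apply hz1
      ext
      exact (QuotientGroup.eq_one_iff g).mpr hgM
    have htop : Z.comap (QuotientGroup.mk' M) = ⊤ :=
      hM.2 _ (lt_of_le_of_ne hMle hne2)
    have hZtop : Z = ⊤ := by
      have h1 := Subgroup.map_comap_eq_self_of_surjective
        (QuotientGroup.mk'_surjective M) (H := Z)
      rw [htop, Subgroup.map_top_of_surjective _ (QuotientGroup.mk'_surjective M)] at h1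
      exact h1.symm
    have hcommQ : ∀ a b : G ⧸ M, a * b = b * a := by
      intro a b
      have : a ∈ Z := hZtop ▸ Subgroup.mem_top a
      exact (Subgroup.mem_center_iff.mp this b).symm
    have hone : (QuotientGroup.mk' M) ⁅x, y⁆ = 1 := by
      rw [map_commutatorElement]
      exact commutatorElement_eq_one_iff_mul_comm.mpr (hcommQ _ _)
    exact (QuotientGroup.eq_one_iff _).mp hone
  -- commutators are central
  have hcent : ∀ x y g : G, Commute ⁅x, y⁆ g := fun x y g =>
    ((Subgroup.mem_center_iff.mp (hcentral (hcomm x y)) g)).symm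
  -- every element of the Frattini subgroup has order dividing p
  have hordc : ∀ g : G, g ∈ frattini G → g ^ p = 1 := by
    intro g hg
    obtain ⟨a, ha⟩ := hbij.2 ⟨g, hg⟩
    obtain ⟨x, rfl⟩ := QuotientGroup.mk_surjective a
    have hgx : g = x ^ p := by
      have h2 := hf x
      rw [ha] at h2
      simpa using h2
    rw [hgx, ← pow_mul, ← pow_two]
    exact hexp x
  -- commutator bilinearity in G
  have hmul_left : ∀ x y z : G, ⁅x * y, z⁆ = ⁅x, z⁆ * ⁅y, z⁆ := by
    intro x y z
    have key : ⁅x * y, z⁆ = x * ⁅y, z⁆ * x⁻¹ * ⁅x, z⁆ := by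
      simp only [commutatorElement_def, mul_inv_rev]; group
    rw [key, mul_assoc x _ x⁻¹, (hcent y z x⁻¹).eq, mul_inv_cancel_left]
    exact ((hcent y z ⁅x, z⁆).eq)
  have hmul_right : ∀ x y z : G, ⁅x, y * z⁆ = ⁅x, y⁆ * ⁅x, z⁆ := by
    intro x y z
    have key : ⁅x, y * z⁆ = ⁅x, y⁆ * (y * ⁅x, z⁆ * y⁻¹) := by
      simp only [commutatorElement_def, mul_inv_rev]; group
    rw [key, ← (hcent x z y).eq, mul_inv_cancel_right]
  -- commutator with central element is trivial
  have htriv : ∀ z g : G, z ∈ frattini G → ⁅z, g⁆ = 1 := by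
    intro z g hz
    exact Commute.commutator_eq ((Subgroup.mem_center_iff.mp (hcentral hz) g).symm)
  have htriv' : ∀ g z : G, z ∈ frattini G → ⁅g, z⁆ = 1 := by
    intro g z hz
    exact Commute.commutator_eq ((Subgroup.mem_center_iff.mp (hcentral hz) g))
  -- well-definedness of the commutator on the quotient
  have hwd : ∀ x x' y y' : G, (x : G ⧸ frattini G) = x' → (y : G ⧸ frattini G) = y' →
      ⁅x, y⁆ = ⁅x', y'⁆ := by
    intro x x' y y' hx hy
    have hzx : x⁻¹ * x' ∈ frattini G := (QuotientGroup.eq).mp hx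
    have hzy : y⁻¹ * y' ∈ frattini G := (QuotientGroup.eq).mp hy
    have ex : x' = x * (x⁻¹ * x') := by group
    have ey : y' = y * (y⁻¹ * y') := by group
    rw [ex, ey, hmul_left, htriv _ _ hzx, mul_one, hmul_right, htriv' _ _ hzy, mul_one]
  -- define the pairing
  set e := Equiv.ofBijective f hbij with he
  set m : G ⧸ frattini G → G ⧸ frattini G → G ⧸ frattini G :=
    fun a b => e.symm ⟨⁅a.out, b.out⁆, hcomm _ _⟩ with hm
  have hfe : ∀ s : frattini G, f (e.symm s) = s := fun s => e.apply_symm_apply s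
  have hkey : ∀ x y : G, (f (m x y) : G) = ⁅x, y⁆ := by
    intro x y
    have h1 : (f (m x y) : G) = ⁅((x : G ⧸ frattini G)).out, ((y : G ⧸ frattini G)).out⁆ := by
      rw [hm]
      simp only
      rw [hfe]
    rw [h1]
    exact (hwd x _ y _ (QuotientGroup.out_eq' _).symm (QuotientGroup.out_eq' _).symm).symm
  have hchoose : ∀ x y : G, ⁅y, x⁆ ^ (p.choose 2) = 1 := by
    intro x y
    have h2p : 2 < p :=
      lt_of_le_of_ne hpp.two_le (by rintro rfl; exact (by decide : ¬ Odd 2) hodd)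
    obtain ⟨t, ht⟩ : p ∣ p.choose 2 := hpp.dvd_choose_self (by norm_num) h2p
    rw [ht, pow_mul, hordc _ (hcomm y x), one_pow]
  have hfm : ∀ a b : G ⧸ frattini G, (f (a * b) : G) = (f a : G) * (f b : G) := by
    intro a b
    obtain ⟨x, rfl⟩ := QuotientGroup.mk_surjective a
    obtain ⟨y, rfl⟩ := QuotientGroup.mk_surjective b
    have h1 : ((x : G ⧸ frattini G) * y) = ((x * y : G) : G ⧸ frattini G) := rfl
    rw [h1, hf, hf, hf]
    rw [mul_pow_aux x y (hcent y x), hchoose x y, mul_one]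
  have hinj : ∀ a b : G ⧸ frattini G, (f a : G) = (f b : G) → a = b := by
    intro a b h
    exact hbij.1 (Subtype.ext h)
  refine ⟨m, hkey, ?_, ?_, ?_⟩
  · intro a b c
    obtain ⟨x, rfl⟩ := QuotientGroup.mk_surjective a
    obtain ⟨y, rfl⟩ := QuotientGroup.mk_surjective b
    obtain ⟨z, rfl⟩ := QuotientGroup.mk_surjective c
    apply hinj
    rw [hfm]
    have h1 : ((x : G ⧸ frattini G) * y) = ((x * y : G) : G ⧸ frattini G) := rfl
    rw [h1, hkey, hkey, hkey, hmul_left]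
  · intro a b c
    obtain ⟨x, rfl⟩ := QuotientGroup.mk_surjective a
    obtain ⟨y, rfl⟩ := QuotientGroup.mk_surjective b
    obtain ⟨z, rfl⟩ := QuotientGroup.mk_surjective c
    apply hinj
    rw [hfm]
    have h1 : ((y : G ⧸ frattini G) * z) = ((y * z : G) : G ⧸ frattini G) := rfl
    rw [h1, hkey, hkey, hkey, hmul_right]
  · intro a
    obtain ⟨x, rfl⟩ := QuotientGroup.mk_surjective a
    apply hinj
    rw [hkey]
    have h1 : ((1 : G ⧸ frattini G)) = ((1 : G) : G ⧸ frattini G) := rfl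
    rw [h1, hf]
    simp
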